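/- arXiv:2006.14172 — 2 statements merged into one kernel-verified Lean document; each statement's English description precedes it below -/
import Mathlib

section
/- Let α, c ∈ ℝ, let V : ℝ → ℝ, and let φ : ℝ → ℝ² be differentiable. Define u : ℝ × ℝ → ℝ² by u(t,x) = R(t)·φ(x − ct). Then for every (t,x) ∈ ℝ², the Lagrangian density of the nonlinear wave equation evaluated at u satisfies ½(⟨∂u/∂t(t,x), ∂u/∂t(t,x)⟩ − ⟨∂u/∂x(t,x), ∂u/∂x(t,x)⟩) + ½V(⟨u(t,x),u(t,x)⟩) = L⁰(φ(ξ), φ'(ξ)) with ξ = x − ct. In particular, restricting the action S(u) = ∫(½(⟨u_t,u_t⟩ − ⟨u_x,u_x⟩) + ½V(⟨u,u⟩)) dt dx to rotating travelling waves yields the symmetrised Lagrangian L⁰. -/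
noncomputable section

open RealInnerProductSpace

/-- The Euclidean plane. -/
abbrev E2 : Type := EuclideanSpace ℝ (Fin 2)

/-- The linear map `J(x₁,x₂) = (x₂, −x₁)`. -/
def Jmap (v : E2) : E2 := !₂[v 1, -v 0]

/-- The rotation `R(t) = exp(tαJ)`. -/
def Rot (α t : ℝ) (v : E2) : E2 :=
  !₂[Real.cos (α * t) * v 0 + Real.sin (α * t) * v 1,
    -Real.sin (α * t) * v 0 + Real.cos (α * t) * v 1]

/-- The symmetrised first-order Lagrangian `L⁰`. -/
def L0 (α c : ℝ) (V : ℝ → ℝ) (a v : E2) : ℝ :=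
  (1 / 2) * (α ^ 2 * ⟪a, a⟫ - 2 * α * c * ⟪Jmap a, v⟫ + (c ^ 2 - 1) * ⟪v, v⟫ + V ⟪a, a⟫)

/-- The Hamiltonian `ℋ` obtained as the Legendre transform of `L⁰`. -/
def Ham (α c : ℝ) (V : ℝ → ℝ) (q p : E2) : ℝ :=
  (1 / (2 * (c ^ 2 - 1))) *
    (‖p‖ ^ 2 + 2 * c * α * ⟪p, Jmap q⟫ + α ^ 2 * ‖q‖ ^ 2 - (c ^ 2 - 1) * V (‖q‖ ^ 2))

lemma hasDerivAt_E2 {f : ℝ → E2} {f' : E2} {t : ℝ}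
    (h0 : HasDerivAt (fun s => f s 0) (f' 0) t)
    (h1 : HasDerivAt (fun s => f s 1) (f' 1) t) : HasDerivAt f f' t := by
  have hp : HasDerivAt (fun s => (fun i => f s i : Fin 2 → ℝ)) (fun i => f' i) t :=
    hasDerivAt_pi.2 fun i => by fin_cases i <;> assumption
  exact (((EuclideanSpace.equiv (Fin 2) ℝ).symm :
      (Fin 2 → ℝ) →L[ℝ] E2).hasFDerivAt.comp_hasDerivAt t hp :)

/-- for `u(t,x) = R(t)·φ(x − ct)`, the Lagrangian density of the
nonlinear wave equation evaluated at `u` equals `L⁰(φ(ξ), φ'(ξ))` with `ξ = x − ct`. -/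
theorem statement2 (α c : ℝ) (V : ℝ → ℝ)
    (φ : ℝ → E2) (hφ : Differentiable ℝ φ)
    (u : ℝ → ℝ → E2) (hu : ∀ t x : ℝ, u t x = Rot α t (φ (x - c * t))) :
    ∀ t x : ℝ,
      (1 / 2) * (⟪deriv (fun s => u s x) t, deriv (fun s => u s x) t⟫
          - ⟪deriv (fun y => u t y) x, deriv (fun y => u t y) x⟫)
        + (1 / 2) * V ⟪u t x, u t x⟫
      = L0 α c V (φ (x - c * t)) (deriv φ (x - c * t)) := by
  intro t x
  have hφd := (hφ (x - c * t)).hasDerivAt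
  have hproj : ∀ i, HasDerivAt (fun y => φ y i) (deriv φ (x - c * t) i) (x - c * t) := fun i =>
    (EuclideanSpace.proj i (𝕜 := ℝ)).hasFDerivAt.comp_hasDerivAt _ hφd
  have hlin : HasDerivAt (fun s : ℝ => x - c * s) (-c) t := by
    simpa using ((hasDerivAt_id t).const_mul c).const_sub x
  have hp : ∀ i, HasDerivAt (fun s => φ (x - c * s) i) (deriv φ (x - c * t) i * -c) t := fun i =>
    (hproj i).comp (h₂ := fun y => φ y i) t hlin
  have hlin2 : HasDerivAt (fun y : ℝ => y - c * t) 1 x := by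
    simpa using (hasDerivAt_id x).sub_const (c * t)
  have hq : ∀ i, HasDerivAt (fun y => φ (y - c * t) i) (deriv φ (x - c * t) i * 1) x := fun i =>
    (hproj i).comp (h₂ := fun y => φ y i) x hlin2
  have hθs : HasDerivAt (fun s : ℝ => α * s) α t := by
    simpa using (hasDerivAt_id t).const_mul α
  have hcos : HasDerivAt (fun s => Real.cos (α * s)) (-Real.sin (α * t) * α) t :=
    (Real.hasDerivAt_cos (α * t)).comp t hθs
  have hsin : HasDerivAt (fun s => Real.sin (α * s)) (Real.cos (α * t) * α) t :=
    (Real.hasDerivAt_sin (α * t)).comp t hθs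
  -- time derivative
  have hDt : HasDerivAt (fun s => u s x)
      (!₂[(-Real.sin (α * t) * α) * φ (x - c * t) 0
          + Real.cos (α * t) * (deriv φ (x - c * t) 0 * -c)
          + ((Real.cos (α * t) * α) * φ (x - c * t) 1
          + Real.sin (α * t) * (deriv φ (x - c * t) 1 * -c)),
        -(Real.cos (α * t) * α) * φ (x - c * t) 0
          + -Real.sin (α * t) * (deriv φ (x - c * t) 0 * -c)
          + ((-Real.sin (α * t) * α) * φ (x - c * t) 1
          + Real.cos (α * t) * (deriv φ (x - c * t) 1 * -c))] : E2) t := by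
    apply hasDerivAt_E2
    · have := (hcos.mul (hp 0)).add (hsin.mul (hp 1))
      simp only [hu, Rot, PiLp.toLp_apply, Matrix.cons_val_zero]
      exact this
    · have := ((hsin.neg).mul (hp 0)).add (hcos.mul (hp 1))
      simp only [hu, Rot, PiLp.toLp_apply, Matrix.cons_val_one, Matrix.cons_val_zero, Matrix.head_cons]
      exact this
  -- space derivative
  have hDx : HasDerivAt (fun y => u t y)
      (!₂[Real.cos (α * t) * (deriv φ (x - c * t) 0 * 1)
          + Real.sin (α * t) * (deriv φ (x - c * t) 1 * 1),
        -Real.sin (α * t) * (deriv φ (x - c * t) 0 * 1)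
          + Real.cos (α * t) * (deriv φ (x - c * t) 1 * 1)] : E2) x := by
    apply hasDerivAt_E2
    · have := ((hq 0).const_mul (Real.cos (α * t))).add ((hq 1).const_mul (Real.sin (α * t)))
      simp only [hu, Rot, PiLp.toLp_apply, Matrix.cons_val_zero]
      exact this
    · have := ((hq 0).const_mul (-Real.sin (α * t))).add ((hq 1).const_mul (Real.cos (α * t)))
      simp only [hu, Rot, PiLp.toLp_apply, Matrix.cons_val_one, Matrix.cons_val_zero, Matrix.head_cons]
      exact this
  have hSC : Real.sin (α * t) ^ 2 + Real.cos (α * t) ^ 2 = 1 := Real.sin_sq_add_cos_sq _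
  have hV : (⟪u t x, u t x⟫ : ℝ) = ⟪φ (x - c * t), φ (x - c * t)⟫ := by
    simp only [hu, Rot, PiLp.inner_apply, RCLike.inner_apply, conj_trivial, PiLp.toLp_apply,
      Fin.sum_univ_two, Matrix.cons_val_zero, Matrix.cons_val_one, Matrix.head_cons]
    linear_combination (φ (x - c * t) 0 ^ 2 + φ (x - c * t) 1 ^ 2) * hSC
  rw [hDt.deriv, hDx.deriv, hV]
  simp only [L0, Jmap, PiLp.inner_apply, RCLike.inner_apply, conj_trivial, PiLp.toLp_apply,
    Fin.sum_univ_two, Matrix.cons_val_zero, Matrix.cons_val_one, Matrix.head_cons]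
  linear_combination (1 / 2) * ((α * φ (x - c * t) 1 - c * deriv φ (x - c * t) 0) ^ 2
    + (α * φ (x - c * t) 0 + c * deriv φ (x - c * t) 1) ^ 2
    - deriv φ (x - c * t) 0 ^ 2 - deriv φ (x - c * t) 1 ^ 2) * hSC
end
end

section
/- Let α, c ∈ ℝ with c² ≠ 1, let V : ℝ → ℝ be continuously differentiable, and let q, p : ℝ → ℝ² be differentiable curves satisfying Hamilton's equations for ℋ, namely q'(ξ) = (p(ξ) + cα·Jq(ξ))/(c² − 1) and p'(ξ) = −(α²·q(ξ) − cα·Jp(ξ))/(c² − 1) + V'(‖q(ξ)‖²)·q(ξ) for all ξ ∈ ℝ. Then the rotation invariant I_rot(q,p) = ⟨Jp, q⟩ is conserved: the function ξ ↦ ⟨Jp(ξ), q(ξ)⟩ is constant on ℝ. -/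
noncomputable section

open RealInnerProductSpace

/-- along solutions of Hamilton's equations for `ℋ`, the rotation
invariant `I_rot(q,p) = ⟨Jp, q⟩` is conserved. -/
theorem statement15 (α c : ℝ) (hc : c ^ 2 ≠ 1) (V : ℝ → ℝ) (hV : ContDiff ℝ 1 V)
    (q p : ℝ → E2) (hq : Differentiable ℝ q) (hp : Differentiable ℝ p)
    (hHam : ∀ ξ : ℝ,
      deriv q ξ = (c ^ 2 - 1)⁻¹ • (p ξ + (c * α) • Jmap (q ξ))
        ∧ deriv p ξ = -((c ^ 2 - 1)⁻¹ • ((α ^ 2) • q ξ - (c * α) • Jmap (p ξ)))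
            + deriv V (‖q ξ‖ ^ 2) • q ξ) :
    ∀ ξ₁ ξ₂ : ℝ, ⟪Jmap (p ξ₁), q ξ₁⟫ = ⟪Jmap (p ξ₂), q ξ₂⟫ := by
  set k : ℝ := (c ^ 2 - 1)⁻¹ with hk
  have key : ∀ ξ : ℝ, HasDerivAt (fun ξ => ⟪Jmap (p ξ), q ξ⟫) 0 ξ := by
    intro ξ
    have hqd : HasDerivAt q (deriv q ξ) ξ := (hq ξ).hasDerivAt
    have hpd : HasDerivAt p (deriv p ξ) ξ := (hp ξ).hasDerivAt
    have hq0 : HasDerivAt (fun ξ => q ξ 0) (deriv q ξ 0) ξ := by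
      exact (EuclideanSpace.proj (0 : Fin 2)).hasFDerivAt.comp_hasDerivAt ξ hqd
    have hq1 : HasDerivAt (fun ξ => q ξ 1) (deriv q ξ 1) ξ := by
      exact (EuclideanSpace.proj (1 : Fin 2)).hasFDerivAt.comp_hasDerivAt ξ hqd
    have hp0 : HasDerivAt (fun ξ => p ξ 0) (deriv p ξ 0) ξ := by
      exact (EuclideanSpace.proj (0 : Fin 2)).hasFDerivAt.comp_hasDerivAt ξ hpd
    have hp1 : HasDerivAt (fun ξ => p ξ 1) (deriv p ξ 1) ξ := by
      exact (EuclideanSpace.proj (1 : Fin 2)).hasFDerivAt.comp_hasDerivAt ξ hpd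
    have hf : HasDerivAt (fun ξ => p ξ 1 * q ξ 0 - p ξ 0 * q ξ 1)
        ((deriv p ξ 1 * q ξ 0 + p ξ 1 * deriv q ξ 0)
          - (deriv p ξ 0 * q ξ 1 + p ξ 0 * deriv q ξ 1)) ξ :=
      (hp1.mul hq0).sub (hp0.mul hq1)
    have heq : (fun ξ => ⟪Jmap (p ξ), q ξ⟫) = fun ξ => p ξ 1 * q ξ 0 - p ξ 0 * q ξ 1 := by
      funext ξ
      simp [Jmap, PiLp.inner_apply, Fin.sum_univ_two, Matrix.cons_val_zero,
        Matrix.cons_val_one, Matrix.head_cons, PiLp.toLp_apply]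
      ring
    rw [heq]
    convert hf using 1
    obtain ⟨hq', hp'⟩ := hHam ξ
    have hq'0 : deriv q ξ 0 = k * (p ξ 0 + c * α * q ξ 1) := by
      rw [hq']; simp only [PiLp.smul_apply, PiLp.add_apply, smul_eq_mul, Jmap, Matrix.cons_val_zero, Matrix.cons_val_one, Matrix.head_cons, PiLp.toLp_apply]; try ring
    have hq'1 : deriv q ξ 1 = k * (p ξ 1 - c * α * q ξ 0) := by
      rw [hq']; simp only [PiLp.smul_apply, PiLp.add_apply, smul_eq_mul, Jmap, Matrix.cons_val_zero, Matrix.cons_val_one, Matrix.head_cons, PiLp.toLp_apply]; try ring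
    have hp'0 : deriv p ξ 0 = -(k * (α ^ 2 * q ξ 0 - c * α * p ξ 1)) + deriv V (‖q ξ‖ ^ 2) * q ξ 0 := by
      rw [hp']; simp only [PiLp.smul_apply, PiLp.add_apply, PiLp.sub_apply, PiLp.neg_apply, smul_eq_mul, Jmap, Matrix.cons_val_zero, Matrix.cons_val_one, Matrix.head_cons, PiLp.toLp_apply]; try ring
    have hp'1 : deriv p ξ 1 = -(k * (α ^ 2 * q ξ 1 + c * α * p ξ 0)) + deriv V (‖q ξ‖ ^ 2) * q ξ 1 := by
      rw [hp']; simp only [PiLp.smul_apply, PiLp.add_apply, PiLp.sub_apply, PiLp.neg_apply, smul_eq_mul, Jmap, Matrix.cons_val_zero, Matrix.cons_val_one, Matrix.head_cons, PiLp.toLp_apply]; try ring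
    rw [hq'0, hq'1, hp'0, hp'1]; ring
  intro ξ₁ ξ₂
  have hconst := is_const_of_deriv_eq_zero (f := fun ξ => ⟪Jmap (p ξ), q ξ⟫)
    (fun ξ => (key ξ).differentiableAt) (fun ξ => (key ξ).deriv)
  exact hconst ξ₁ ξ₂
end
end
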